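/- Let T and T'' be topologies on a finite set X with T'' ⊚≺ T. Then the map T' ↦ T'/T'' is a bijection from the set of topologies T' on X with T'' ⊚≺ T' ⊚≺ T onto the set of topologies U on X with U ⊚≺ T/T''. -/

import Mathlib

variable {X : Type*}

/-- The specialization quasi-order of a topology: `x ≤_T y` iff every
`T`-open set containing `x` contains `y`. -/
def leT (t : TopologicalSpace X) (x y : X) : Prop :=
  ∀ U : Set X, t.IsOpen U → x ∈ U → y ∈ U

/-- The specialization equivalence `∼_T`. -/
def simT (t : TopologicalSpace X) (x y : X) : Prop :=
  leT t x y ∧ leT t y x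

/-- The topology of final segments of a relation `r`. -/
def topOfRel (r : X → X → Prop) : TopologicalSpace X where
  IsOpen U := ∀ x ∈ U, ∀ y, r x y → y ∈ U
  isOpen_univ := fun _ _ y _ => Set.mem_univ y
  isOpen_inter := fun U V hU hV x hx y hr => ⟨hU x hx.1 y hr, hV x hx.2 y hr⟩
  isOpen_sUnion := fun S hS x hx y hr => by
    obtain ⟨U, hU, hxU⟩ := hx
    exact ⟨U, hU, hS U hU x hxU y hr⟩

/-- `T'` is finer than `T`: every `T`-open set is `T'`-open. -/
def finer (t' t : TopologicalSpace X) : Prop :=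
  ∀ U : Set X, t.IsOpen U → t'.IsOpen U

/-- The quasi-order of the quotient topology `T/T'`: the transitive closure of
`x R y ↔ (x ≤_T y or y ≤_{T'} x)`. -/
def quotRel (t t' : TopologicalSpace X) : X → X → Prop :=
  Relation.ReflTransGen (fun x y => leT t x y ∨ leT t' y x)

/-- The quotient topology `T/T'`. -/
def quotTop (t t' : TopologicalSpace X) : TopologicalSpace X :=
  topOfRel (quotRel t t')

/-- Restriction (subspace topology) of `t` to a subset `Y`. -/
def restrictT (t : TopologicalSpace X) (Y : Set X) : TopologicalSpace Y :=
  t.induced Subtype.val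

/-- `T'` is `T`-admissible (`T' ⊚≺ T`). -/
def adm (t' t : TopologicalSpace X) : Prop :=
  finer t' t ∧
  (∀ Y : Set X, @IsConnected X t' Y → restrictT t' Y = restrictT t Y) ∧
  (∀ x y : X,
    (quotRel t t' x y ∧ quotRel t t' y x) ↔ (quotRel t' t' x y ∧ quotRel t' t' y x))

namespace QuotBij

open Relation

lemma leT_refl (t : TopologicalSpace X) (x : X) : leT t x x := fun _ _ h => h

lemma leT_trans {t : TopologicalSpace X} {x y z : X} (h1 : leT t x y) (h2 : leT t y z) :
    leT t x z := fun U hU hx => h2 U hU (h1 U hU hx)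

/-- zigzag closure -/
def Er (r : X → X → Prop) : X → X → Prop :=
  Relation.ReflTransGen (fun x y => r x y ∨ r y x)

/-- relational quotient order -/
def qrel (ρ σ : X → X → Prop) : X → X → Prop :=
  Relation.ReflTransGen (fun x y => ρ x y ∨ σ y x)

lemma Er_symm {r : X → X → Prop} {x y : X} (h : Er r x y) : Er r y x := by
  induction h with
  | refl => exact .refl
  | tail _ h2 ih => exact Relation.ReflTransGen.head (h2.symm) ih

lemma rtg_le {r p : X → X → Prop} (hrefl : ∀ x, p x x)
    (htrans : ∀ {x y z : X}, p x y → p y z → p x z)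
    (h : ∀ z w, r z w → p z w) {x y : X} (hxy : Relation.ReflTransGen r x y) : p x y := by
  induction hxy with
  | refl => exact hrefl x
  | tail _ h2 ih => exact htrans ih (h _ _ h2)

lemma rtg_reverse {r r' : X → X → Prop} (h : ∀ z w, r z w → r' w z) {x y : X}
    (hxy : Relation.ReflTransGen r x y) : Relation.ReflTransGen r' y x := by
  induction hxy with
  | refl => exact .refl
  | tail _ h2 ih => exact Relation.ReflTransGen.head (h _ _ h2) ih

/-- relational admissibility -/
def radm (σ ρ : X → X → Prop) : Prop :=
  (∀ x y, σ x y → ρ x y) ∧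
  (∀ x y, Er σ x y → ρ x y → σ x y) ∧
  (∀ x y, qrel ρ σ x y → qrel ρ σ y x → Er σ x y)

lemma leT_topOfRel {r : X → X → Prop} {x y : X} :
    leT (topOfRel r) x y ↔ Relation.ReflTransGen r x y := by
  constructor
  · intro h
    exact h {z | Relation.ReflTransGen r x z} (fun a ha b hb => ha.tail hb) .refl
  · intro h U hU hx
    induction h with
    | refl => exact hx
    | tail _ h2 ih => exact hU _ ih _ h2

lemma topOfRel_leT [Finite X] (t : TopologicalSpace X) : topOfRel (leT t) = t := by
  apply TopologicalSpace.ext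
  funext U
  apply propext
  constructor
  · intro hU
    have hEq : U = ⋃ x ∈ U, ⋂₀ {V | t.IsOpen V ∧ x ∈ V} := by
      apply Set.Subset.antisymm
      · intro x hx
        exact Set.mem_biUnion hx (Set.mem_sInter.mpr fun V hV => hV.2)
      · intro y hy
        simp only [Set.mem_iUnion] at hy
        obtain ⟨x, hx, hy⟩ := hy
        exact hU x hx y (fun V hV hxV => Set.mem_sInter.mp hy V ⟨hV, hxV⟩)
    rw [hEq]
    letI := t
    apply isOpen_biUnion
    intro x _
    exact Set.Finite.isOpen_sInter (Set.toFinite _) (fun V hV => hV.1)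
  · intro hU x hx y hxy
    exact hxy U hU hx

lemma ext_leT [Finite X] {t1 t2 : TopologicalSpace X} (h : leT t1 = leT t2) : t1 = t2 := by
  rw [← topOfRel_leT t1, ← topOfRel_leT t2, h]

lemma isOpen_iff [Finite X] {t : TopologicalSpace X} {U : Set X} :
    t.IsOpen U ↔ ∀ x ∈ U, ∀ y, leT t x y → y ∈ U := by
  conv_lhs => rw [← topOfRel_leT t]
  exact Iff.rfl

lemma finer_iff [Finite X] {t' t : TopologicalSpace X} :
    finer t' t ↔ ∀ x y, leT t' x y → leT t x y := by
  constructor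
  · intro h x y hxy U hU hx
    exact hxy U (h U hU) hx
  · intro h U hU
    rw [isOpen_iff] at hU ⊢
    exact fun x hx y hxy => hU x hx y (h x y hxy)

lemma leT_restrict {t : TopologicalSpace X} {Y : Set X} {x y : Y} :
    leT (restrictT t Y) x y ↔ leT t x y := by
  constructor
  · intro h U hU hx
    exact h (Subtype.val ⁻¹' U) ⟨U, hU, rfl⟩ hx
  · intro h V hV hx
    obtain ⟨U, hU, rfl⟩ := hV
    exact h U hU hx

lemma leT_quotTop {t1 t2 : TopologicalSpace X} :
    leT (quotTop t1 t2) = qrel (leT t1) (leT t2) := by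
  funext x y
  apply propext
  rw [quotTop, leT_topOfRel]
  show Relation.ReflTransGen (Relation.ReflTransGen _) x y ↔ _
  rw [Relation.reflTransGen_idem]
  exact Iff.rfl

lemma isClopen_class [Finite X] (t : TopologicalSpace X) (x : X) :
    @IsClopen X t {y | Er (leT t) x y} := by
  letI := t
  constructor
  · rw [← isOpen_compl_iff]
    refine isOpen_iff.mpr ?_
    intro y hy z hyz hz
    exact hy (Relation.ReflTransGen.tail hz (Or.inr hyz))
  · refine isOpen_iff.mpr ?_
    intro y hy z hyz
    exact Relation.ReflTransGen.tail hy (Or.inl hyz)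

lemma chain_meet [Finite X] {t : TopologicalSpace X} {U V Y : Set X}
    (hU : ∀ a ∈ U, ∀ b, leT t a b → b ∈ U) (hV : ∀ a ∈ V, ∀ b, leT t a b → b ∈ V)
    (hYcl : ∀ a ∈ Y, ∀ b, (leT t a b ∨ leT t b a) → b ∈ Y)
    (hsub : Y ⊆ U ∪ V) {q : X} (hqV : q ∈ V) {p : X} (h : Er (leT t) p q) :
    p ∈ Y → p ∈ U → ∃ z, z ∈ Y ∧ z ∈ U ∧ z ∈ V := by
  induction h using Relation.ReflTransGen.head_induction_on with
  | refl => exact fun hqY hqU => ⟨q, hqY, hqU, hqV⟩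
  | head hstep hrest ih =>
    rename_i a c
    intro haY haU
    have hcY : c ∈ Y := hYcl a haY c hstep
    rcases hsub hcY with hcU | hcV
    · exact ih hcY hcU
    · rcases hstep with h1 | h1
      · exact ⟨c, hcY, hU a haU c h1, hcV⟩
      · exact ⟨a, haY, haU, hV c hcV a h1⟩

lemma isPreconnected_class [Finite X] (t : TopologicalSpace X) (x : X) :
    @IsPreconnected X t {y | Er (leT t) x y} := by
  letI := t
  intro U V hU hV hsub ⟨p, hpY, hpU⟩ ⟨q, hqY, hqV⟩
  have hpq : Er (leT t) p q := (Er_symm hpY).trans hqY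
  have hU' : ∀ a ∈ U, ∀ b, leT t a b → b ∈ U := fun a ha b hab => isOpen_iff.mp hU a ha b hab
  have hV' : ∀ a ∈ V, ∀ b, leT t a b → b ∈ V := fun a ha b hab => isOpen_iff.mp hV a ha b hab
  have hYcl : ∀ a ∈ {y | Er (leT t) x y}, ∀ b, (leT t a b ∨ leT t b a) → b ∈ {y | Er (leT t) x y} :=
    fun a ha b hab => Relation.ReflTransGen.tail ha hab
  obtain ⟨z, hz1, hz2, hz3⟩ := chain_meet hU' hV' hYcl hsub hqV hpq hpY hpU
  exact ⟨z, hz1, hz2, hz3⟩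

lemma connected_er [Finite X] {t : TopologicalSpace X} {Y : Set X} (hY : @IsConnected X t Y)
    {x y : X} (hx : x ∈ Y) (hy : y ∈ Y) : Er (leT t) x y := by
  letI := t
  have := hY.isPreconnected.subset_isClopen (isClopen_class t x) ⟨x, hx, Relation.ReflTransGen.refl⟩
  exact this hy

lemma adm_iff [Finite X] {s r : TopologicalSpace X} :
    adm s r ↔ radm (leT s) (leT r) := by
  constructor
  · rintro ⟨h1, h2, h3⟩
    refine ⟨finer_iff.mp h1, ?_, ?_⟩
    · intro x y hxy hr
      set Y : Set X := {z | Er (leT s) x z} with hYdef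
      have hconn : @IsConnected X s Y := ⟨⟨x, Relation.ReflTransGen.refl⟩, isPreconnected_class s x⟩
      have heq := h2 Y hconn
      have hx : x ∈ Y := Relation.ReflTransGen.refl
      have hy : y ∈ Y := hxy
      have hle : leT (restrictT s Y) ⟨x, hx⟩ ⟨y, hy⟩ := by
        rw [heq, leT_restrict]
        exact hr
      exact leT_restrict.mp hle
    · intro x y hxy hyx
      exact ((h3 x y).mp ⟨hxy, hyx⟩).1
  · rintro ⟨h1, h2, h3⟩
    refine ⟨finer_iff.mpr h1, ?_, ?_⟩
    · intro Y hY
      apply ext_leT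
      funext u v
      apply propext
      rw [leT_restrict, leT_restrict]
      constructor
      · exact h1 _ _
      · intro hr
        exact h2 _ _ (connected_er hY u.2 v.2) hr
    · intro x y
      constructor
      · rintro ⟨hxy, hyx⟩
        have h := h3 x y hxy hyx
        exact ⟨h, Er_symm h⟩
      · rintro ⟨hxy, hyx⟩
        have hsub : ∀ u v : X, Er (leT s) u v → qrel (leT r) (leT s) u v := by
          intro u v huv
          exact Relation.ReflTransGen.mono (fun a b (hab : _ ∨ _) => hab.imp (h1 a b) id) _ _ huv
        exact ⟨hsub x y hxy, hsub y x hyx⟩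

section Core

variable {a b c v : X → X → Prop}

lemma qrel_sub_Er (hcb : ∀ x y, c x y → b x y) {x y : X} (h : qrel b c x y) : Er b x y := by
  refine rtg_le (fun x => .refl) (fun h1 h2 => h1.trans h2) ?_ h
  intro z w hz
  exact hz.elim (fun h' => .single (.inl h')) (fun h' => .single (.inr (hcb _ _ h')))

lemma Er_qrel (hcb : ∀ x y, c x y → b x y) {x y : X} :
    Er (qrel b c) x y ↔ Er b x y := by
  constructor
  · refine rtg_le (fun x => .refl) (fun h1 h2 => h1.trans h2) ?_
    intro z w hz
    exact hz.elim (qrel_sub_Er hcb) (fun h' => Er_symm (qrel_sub_Er hcb h'))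
  · refine Relation.ReflTransGen.mono ?_ _ _
    intro z w hz
    exact hz.imp (fun h' => .single (.inl h')) (fun h' => .single (.inl h'))

/-- Key upgrade lemma: a zigzag-connected pair related in the big quotient order is
related in the small quotient order. -/
lemma upgrade (hba : radm b a) (hcb : ∀ x y, c x y → b x y) {x y : X}
    (hEr : Er b x y) (hQ : qrel a c x y) : qrel b c x y := by
  have hQM : ∀ u w : X, qrel a c u w → qrel a b u w := fun u w h =>
    Relation.ReflTransGen.mono (fun z z' (hz : _ ∨ _) => hz.imp id (hcb _ _)) _ _ h
  have hErM : ∀ u w : X, Er b u w → qrel a b u w := fun u w h =>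
    rtg_le (fun _ => .refl) (fun h1 h2 => h1.trans h2)
      (fun z z' hz => hz.elim (fun h' => .single (.inl (hba.1 _ _ h')))
        (fun h' => .single (.inr h'))) h
  have key : ∀ p : X, qrel a c p y → Er b x p → qrel b c p y := by
    intro p hp
    induction hp using Relation.ReflTransGen.head_induction_on with
    | refl => exact fun _ => .refl
    | head hstep hrest ih =>
      rename_i z w
      intro hxz
      have hMzw : qrel a b z w := .single (hstep.imp id (hcb _ _))
      have hMwz : qrel a b w z :=
        ((hQM _ _ hrest).trans (hErM _ _ (Er_symm hEr))).trans (hErM _ _ hxz)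
      have hzw : Er b z w := hba.2.2 z w hMzw hMwz
      have hstep' : b z w ∨ c w z :=
        hstep.elim (fun ha => Or.inl (hba.2.1 z w hzw ha)) Or.inr
      exact Relation.ReflTransGen.head hstep' (ih (hxz.trans hzw))
  exact key x hQ .refl

/-- Forward well-definedness. -/
lemma radm_quot (hca : radm c a) (hcb : radm c b) (hba : radm b a) :
    radm (qrel b c) (qrel a c) := by
  have hQM : ∀ u w : X, qrel a c u w → qrel a b u w := fun u w h =>
    Relation.ReflTransGen.mono (fun z z' (hz : _ ∨ _) => hz.imp id (hcb.1 _ _)) _ _ h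
  refine ⟨?_, ?_, ?_⟩
  · intro x y h
    exact Relation.ReflTransGen.mono (fun z w (hz : _ ∨ _) => hz.imp (hba.1 z w) id) _ _ h
  · intro x y hE hQ
    exact upgrade hba hcb.1 ((Er_qrel hcb.1).mp hE) hQ
  · intro x y h1 h2
    have hmap : ∀ u w : X, qrel (qrel a c) (qrel b c) u w → qrel a b u w := by
      intro u w h
      refine rtg_le (fun _ => .refl) (fun h1 h2 => h1.trans h2) ?_ h
      intro z z' hz
      rcases hz with hz | hz
      · exact hQM _ _ hz
      · refine rtg_reverse ?_ hz
        intro p q hpq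
        exact hpq.elim (fun h' => Or.inr h') (fun h' => Or.inl (hca.1 _ _ h'))
    exact (Er_qrel hcb.1).mpr (hba.2.2 x y (hmap _ _ h1) (hmap _ _ h2))

lemma mem_of (hcb : ∀ x y, c x y → b x y) (hba : radm b a) (x y : X) :
    b x y ↔ a x y ∧ qrel b c x y :=
  ⟨fun h => ⟨hba.1 x y h, .single (.inl h)⟩,
   fun ⟨ha, hq⟩ => hba.2.1 x y (qrel_sub_Er hcb hq) ha⟩

end Core

section Surj

variable {a c v : X → X → Prop}

/-- Every `c`-zigzag pair is `v`-equivalent (needed for surjectivity). -/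
lemma Er_c_sub_v (hca : radm c a) (hvQ : radm v (qrel a c)) {x y : X}
    (h : Er c x y) : v x y ∧ v y x := by
  have hErcQ : ∀ u w : X, Er c u w → qrel a c u w := fun u w h =>
    rtg_le (fun _ => .refl) (fun h1 h2 => h1.trans h2)
      (fun z z' hz => hz.elim (fun h' => .single (.inl (hca.1 _ _ h')))
        (fun h' => .single (.inr h'))) h
  have hQxy := hErcQ _ _ h
  have hQyx := hErcQ _ _ (Er_symm h)
  have hEv : Er v x y := hvQ.2.2 x y (.single (.inl hQxy)) (.single (.inl hQyx))
  exact ⟨hvQ.2.1 x y hEv hQxy, hvQ.2.1 y x (Er_symm hEv) hQyx⟩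

lemma qrel_inf_eq (hca : radm c a) (hvQ : radm v (qrel a c))
    (hvrefl : ∀ x, v x x) (hvtrans : ∀ {x y z : X}, v x y → v y z → v x z) {x y : X} :
    qrel (fun p q => a p q ∧ v p q) c x y ↔ v x y := by
  constructor
  · refine rtg_le hvrefl (fun h1 h2 => hvtrans h1 h2) ?_
    intro z w hz
    exact hz.elim (fun h' => h'.2) (fun h' => (Er_c_sub_v hca hvQ (.single (.inl h'))).2)
  · intro hv
    have hQxy : qrel a c x y := hvQ.1 x y hv
    have hQN : ∀ u w : X, qrel a c u w → qrel (qrel a c) v u w := fun u w h =>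
      .single (.inl h)
    have hErvN : ∀ u w : X, Er v u w → qrel (qrel a c) v u w := fun u w h =>
      rtg_le (fun _ => .refl) (fun h1 h2 => h1.trans h2)
        (fun z z' hz => hz.elim (fun h' => .single (.inl (hvQ.1 _ _ h')))
          (fun h' => .single (.inr h'))) h
    have key : ∀ p : X, qrel a c p y → Er v x p →
        qrel (fun p q => a p q ∧ v p q) c p y := by
      intro p hp
      induction hp using Relation.ReflTransGen.head_induction_on with
      | refl => exact fun _ => .refl
      | head hstep hrest ih =>
        rename_i z w
        intro hxz
        have hNzw : qrel (qrel a c) v z w := .single (.inl (.single hstep))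
        have hNwz : qrel (qrel a c) v w z :=
          ((hQN _ _ hrest).trans (.single (.inr hv))).trans (hErvN _ _ hxz)
        have hzw : Er v z w := hvQ.2.2 z w hNzw hNwz
        have hstep' : (a z w ∧ v z w) ∨ c w z :=
          hstep.elim (fun ha => Or.inl ⟨ha, hvQ.2.1 z w hzw (.single (.inl ha))⟩) Or.inr
        exact Relation.ReflTransGen.head hstep' (ih (hxz.trans hzw))
    exact key x hQxy .refl

lemma radm_cb_of (hca : radm c a) (hvQ : radm v (qrel a c))
    (hvrefl : ∀ x, v x x) (hvtrans : ∀ {x y z : X}, v x y → v y z → v x z) :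
    radm c (fun p q => a p q ∧ v p q) := by
  refine ⟨?_, ?_, ?_⟩
  · intro x y h
    exact ⟨hca.1 x y h, (Er_c_sub_v hca hvQ (.single (.inl h))).1⟩
  · intro x y hE hb
    exact hca.2.1 x y hE hb.1
  · intro x y h1 h2
    rw [qrel_inf_eq hca hvQ hvrefl hvtrans] at h1 h2
    exact hca.2.2 x y (hvQ.1 x y h1) (hvQ.1 y x h2)

lemma radm_ba_of (hca : radm c a) (hvQ : radm v (qrel a c))
    (hvrefl : ∀ x, v x x) (hvtrans : ∀ {x y z : X}, v x y → v y z → v x z) :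
    radm (fun p q => a p q ∧ v p q) a := by
  have hcb : ∀ x y, c x y → a x y ∧ v x y :=
    fun x y h => ⟨hca.1 x y h, (Er_c_sub_v hca hvQ (.single (.inl h))).1⟩
  refine ⟨fun x y h => h.1, ?_, ?_⟩
  · intro x y hE ha
    have hEv : Er v x y :=
      Relation.ReflTransGen.mono (fun z w (hz : _ ∨ _) => hz.imp (fun h' => h'.2) (fun h' => h'.2)) _ _ hE
    exact ⟨ha, hvQ.2.1 x y hEv (.single (.inl ha))⟩
  · intro x y h1 h2
    have hmap : ∀ u w : X, qrel a (fun p q => a p q ∧ v p q) u w →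
        qrel (qrel a c) v u w := by
      intro u w h
      refine Relation.ReflTransGen.mono ?_ _ _ h
      intro z z' hz
      exact hz.imp (fun h' => .single (.inl h')) (fun h' => h'.2)
    have hEv : Er v x y := hvQ.2.2 x y (hmap _ _ h1) (hmap _ _ h2)
    have hvEb : ∀ u w : X, v u w → Er (fun p q => a p q ∧ v p q) u w := by
      intro u w h
      exact qrel_sub_Er hcb ((qrel_inf_eq hca hvQ hvrefl hvtrans).mpr h)
    refine rtg_le (fun _ => .refl) (fun h1 h2 => h1.trans h2) ?_ hEv
    intro z z' hz
    exact hz.elim (hvEb _ _) (fun h' => Er_symm (hvEb _ _ h'))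

end Surj

end QuotBij

open QuotBij

/-- For T'' ⊚≺ T, the map T' ↦ T'/T'' is a bijection from
{T' | T'' ⊚≺ T' ⊚≺ T} onto {U | U ⊚≺ T/T''}. -/
theorem quot_bijection [Finite X] (t t'' : TopologicalSpace X) (h : adm t'' t) :
    Set.BijOn (fun t' => quotTop t' t'')
      {t' : TopologicalSpace X | adm t'' t' ∧ adm t' t}
      {u : TopologicalSpace X | adm u (quotTop t t'')} := by
  rw [adm_iff] at h
  refine ⟨?_, ?_, ?_⟩
  · intro t' ht'
    obtain ⟨h1, h2⟩ := ht'
    rw [adm_iff] at h1 h2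
    simp only [Set.mem_setOf_eq, adm_iff, leT_quotTop]
    exact radm_quot h h1 h2
  · intro t1 ht1 t2 ht2 heq
    simp only [Set.mem_setOf_eq, adm_iff] at ht1 ht2
    have hq := congrArg leT heq
    rw [leT_quotTop, leT_quotTop] at hq
    apply ext_leT
    funext x y
    apply propext
    rw [mem_of ht1.1.1 ht1.2 x y, mem_of ht2.1.1 ht2.2 x y, hq]
  · intro u hu
    simp only [Set.mem_setOf_eq, adm_iff, leT_quotTop] at hu
    have hvtrans : ∀ {x y z : X}, leT u x y → leT u y z → leT u x z :=
      fun h1 h2 => leT_trans h1 h2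
    have hb : leT (topOfRel (fun p q => leT t p q ∧ leT u p q)) =
        fun p q => leT t p q ∧ leT u p q := by
      funext x y
      apply propext
      rw [leT_topOfRel]
      constructor
      · intro hxy
        exact rtg_le (p := fun p q => leT t p q ∧ leT u p q)
          (fun z => ⟨leT_refl t z, leT_refl u z⟩)
          (fun h1 h2 => ⟨leT_trans h1.1 h2.1, leT_trans h1.2 h2.2⟩) (fun _ _ h' => h') hxy
      · exact fun h' => Relation.ReflTransGen.single h'
    refine ⟨topOfRel (fun p q => leT t p q ∧ leT u p q), ⟨?_, ?_⟩, ?_⟩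
    · rw [adm_iff, hb]
      exact radm_cb_of h hu (leT_refl u) hvtrans
    · rw [adm_iff, hb]
      exact radm_ba_of h hu (leT_refl u) hvtrans
    · show quotTop _ t'' = u
      apply ext_leT
      rw [leT_quotTop, hb]
      funext x y
      exact propext (qrel_inf_eq h hu (leT_refl u) hvtrans)
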